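/- For every integer i with 1 ≤ i ≤ T, one has (1 − ε²)(1 − ε)^{2(i−1)} ≥ ε²(1 + ε)/8. -/

import Mathlib

set_option maxHeartbeats 1000000 in
/-- If `0 < ε ≤ 1/10` and `T := ⌊(1/ε)·ln(1/ε)⌋`, then for every integer `i` with
`1 ≤ i ≤ T` one has `(1 − ε²)(1 − ε)^{2(i−1)} ≥ ε²(1 + ε)/8`. -/
theorem stmt_8 (ε : ℝ) (hε0 : 0 < ε) (hε1 : ε ≤ 1 / 10)
    (T : ℕ) (hT : T = ⌊(1 / ε) * Real.log (1 / ε)⌋₊) :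
    ∀ i : ℕ, 1 ≤ i → i ≤ T →
      (1 - ε ^ 2) * (1 - ε) ^ (2 * (i - 1)) ≥ ε ^ 2 * (1 + ε) / 8 := by
  intro i hi1 hiT
  have h1ε : (0:ℝ) < 1 - ε := by linarith
  set L := Real.log (1/ε) with hLdef
  have hL0 : 0 ≤ L := Real.log_nonneg (by rw [le_div_iff₀ hε0]; linarith)
  have hs0 : 0 ≤ Real.sqrt ε := Real.sqrt_nonneg ε
  have hs2 : Real.sqrt ε ^ 2 = ε := Real.sq_sqrt hε0.le
  have hspos : 0 < Real.sqrt ε := Real.sqrt_pos.mpr hε0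
  have hs32 : Real.sqrt ε ≤ 0.317 := by nlinarith
  have hL2 : L ≤ 2 / Real.sqrt ε := by
    have h1 : (1:ℝ)/ε = (1/Real.sqrt ε)^2 := by rw [div_pow, one_pow, hs2]
    have h2 : L = 2 * Real.log (1/Real.sqrt ε) := by
      rw [hLdef, h1, Real.log_pow]; push_cast; ring
    have h3 : Real.log (1/Real.sqrt ε) ≤ 1/Real.sqrt ε - 1 :=
      Real.log_le_sub_one_of_pos (by positivity)
    rw [h2]
    have h4 : 2 * (1/Real.sqrt ε) ≤ 2/Real.sqrt ε := by rw [mul_one_div]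
    linarith
  have hεL : ε * L ≤ 0.634 := by
    have key : ε * (2 / Real.sqrt ε) = 2 * Real.sqrt ε := by
      rw [mul_comm, div_mul_eq_mul_div, div_eq_iff hspos.ne']
      linear_combination (-2 : ℝ) * hs2
    have h5 := mul_le_mul_of_nonneg_left hL2 hε0.le
    rw [key] at h5
    linarith
  have hTε : (T:ℝ) * ε ≤ L := by
    have h4 : (T:ℝ) ≤ 1/ε * L := by rw [hT]; exact Nat.floor_le (by positivity)
    have h5 : 1/ε * L * ε = L := by field_simp
    nlinarith [mul_le_mul_of_nonneg_right h4 hε0.le]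
  have hT1 : 1 ≤ T := le_trans hi1 hiT
  have hmono : (1-ε)^(2*(T-1)) ≤ (1-ε)^(2*(i-1)) :=
    pow_le_pow_of_le_one h1ε.le (by linarith) (by omega)
  have hlog : -(ε/(1-ε)) ≤ Real.log (1-ε) := by
    have h5 : Real.log ((1-ε)⁻¹) ≤ (1-ε)⁻¹ - 1 := Real.log_le_sub_one_of_pos (by positivity)
    rw [Real.log_inv] at h5
    have h6 : (1-ε)⁻¹ - 1 = ε/(1-ε) := by field_simp; ring
    linarith [h6 ▸ h5]
  set n : ℕ := 2*(T-1) with hn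
  have hpow : Real.exp (-((n:ℝ) * (ε/(1-ε)))) ≤ (1-ε)^n := by
    have h7 : (1-ε)^n = Real.exp ((n:ℝ) * Real.log (1-ε)) := by
      rw [Real.exp_nat_mul, Real.exp_log h1ε]
    rw [h7]
    apply Real.exp_le_exp.mpr
    have h8 := mul_le_mul_of_nonneg_left hlog (Nat.cast_nonneg n : (0:ℝ) ≤ n)
    linarith
  have hnε : (n:ℝ) * ε ≤ 2 * L := by
    have hcast : ((n:ℕ):ℝ) = 2*((T:ℝ)-1) := by
      rw [hn]; push_cast [Nat.cast_sub hT1]; ring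
    rw [hcast]; nlinarith
  set c : ℝ := 2*ε*L/(1-ε) with hcdef
  have hc0 : 0 ≤ c := by positivity
  have hc145 : c ≤ 1.45 := by
    rw [hcdef, div_le_iff₀ h1ε]; nlinarith
  have hdiv : (n:ℝ) * (ε/(1-ε)) ≤ 2*L/(1-ε) := by
    rw [← mul_div_assoc]
    gcongr
  have hLε : L = -Real.log ε := by rw [hLdef, one_div, Real.log_inv]
  have h9 : -(2*L/(1-ε)) = 2*Real.log ε + (-c) := by
    rw [hcdef, hLε]; field_simp; ring
  have h10 : Real.exp (2*Real.log ε + (-c)) = ε^2 * Real.exp (-c) := by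
    rw [Real.exp_add, two_mul, Real.exp_add, Real.exp_log hε0]; ring
  have hstep : ε^2 * Real.exp (-c) ≤ (1-ε)^n := by
    calc ε^2 * Real.exp (-c) = Real.exp (-(2*L/(1-ε))) := by rw [h9, h10]
    _ ≤ Real.exp (-((n:ℝ) * (ε/(1-ε)))) := Real.exp_le_exp.mpr (by linarith)
    _ ≤ (1-ε)^n := hpow
  -- exp(-c) ≥ (1-c/4)^4 ≥ 0.6375^4
  have hq : (0:ℝ) ≤ 1 - c/4 := by linarith
  have hexpc : ((6765201:ℝ)/40960000) ≤ Real.exp (-c) := by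
    have h11 : Real.exp (-c) = (Real.exp (-(c/4)))^4 := by
      rw [← Real.exp_nat_mul]; norm_num; ring_nf
    have h12 : 1 - c/4 ≤ Real.exp (-(c/4)) := by
      linarith [Real.add_one_le_exp (-(c/4))]
    have h13 : (51/80:ℝ) ≤ 1 - c/4 := by linarith
    calc ((6765201:ℝ)/40960000) = (51/80:ℝ)^4 := by norm_num
    _ ≤ (1-c/4)^4 := pow_le_pow_left₀ (by norm_num) h13 4
    _ ≤ (Real.exp (-(c/4)))^4 := pow_le_pow_left₀ hq h12 4
    _ = Real.exp (-c) := h11.symm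
  -- assemble
  have hfinal : ε ^ 2 * (1 + ε) / 8 ≤ (1 - ε^2) * ((1-ε)^n) := by
    have h14 : ε^2 * ((6765201:ℝ)/40960000) ≤ ε^2 * Real.exp (-c) := by
      apply mul_le_mul_of_nonneg_left hexpc (by positivity)
    have h15 : ε^2 * Real.exp (-c) ≤ (1-ε)^n := hstep
    have h16 : (0:ℝ) < 1 - ε^2 := by nlinarith
    have hsq : ε^2 ≤ 1/100 := by
      rw [show (1:ℝ)/100 = (1/10)^2 by norm_num]
      exact pow_le_pow_left₀ hε0.le hε1 2
    have hsc : (1 + ε) / 8 ≤ (1 - ε^2) * ((6765201:ℝ)/40960000) := by linarith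
    have h18 : ε^2 * ((6765201:ℝ)/40960000) ≤ (1-ε)^n := h14.trans h15
    calc ε ^ 2 * (1 + ε) / 8 = ε^2 * ((1 + ε) / 8) := by ring
    _ ≤ ε^2 * ((1 - ε^2) * ((6765201:ℝ)/40960000)) :=
        mul_le_mul_of_nonneg_left hsc (sq_nonneg ε)
    _ = (1 - ε^2) * (ε^2 * ((6765201:ℝ)/40960000)) := by ring
    _ ≤ (1 - ε^2) * ((1-ε)^n) := mul_le_mul_of_nonneg_left h18 h16.le
  calc ε ^ 2 * (1 + ε) / 8 ≤ (1 - ε^2) * ((1-ε)^n) := hfinal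
  _ ≤ (1 - ε^2) * ((1-ε)^(2*(i-1))) := by
      apply mul_le_mul_of_nonneg_left hmono (by nlinarith)
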